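/- Crossover criterion: for every rooted plane tree T with n(T) = n ≥ 2 nodes and l(T) = l leaves, the binary tunnel-digging code TD(T) is strictly shorter than the binary pit-climbing code PC(T) if and only if 2l > n; moreover the two codes have equal length if and only if 2l = n. -/

import Mathlib

/-- A rooted plane tree: a root node together with a finite ordered list of
subtrees, the subtrees rooted at the children of the root. -/
inductive PTree : Type
  | node : List PTree → PTree

namespace PTree

/-- The subtrees rooted at the children of the root. -/
def children : PTree → List PTree
  | node ts => ts

mutual
/-- Number of nodes of a rooted plane tree. -/
def numNodes : PTree → ℕ
  | node ts => 1 + numNodesList ts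
def numNodesList : List PTree → ℕ
  | [] => 0
  | t :: ts => numNodes t + numNodesList ts
end

mutual
/-- Number of leaves (nodes with no children); a single-node tree has one leaf. -/
def numLeaves : PTree → ℕ
  | node [] => 1
  | node (t :: ts) => numLeaves t + numLeavesList ts
def numLeavesList : List PTree → ℕ
  | [] => 0
  | t :: ts => numLeaves t + numLeavesList ts
end

/-- Symbols of the ternary pit-climbing code: ↓, ↑, ⇑. -/
inductive PCSym : Type
  | down   -- ↓ : fall to the leftmost unexplored leaf
  | up     -- ↑ : climb to a never-before-visited node
  | upSeen -- ⇑ : climb to an already-visited node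
deriving DecidableEq

mutual
/-- Ternary pit-climbing code TPC: empty for a single node; `TPC t ++ [↑]` for a
single child subtree `t`; `TPC t₁ ++ [↑,↓] ++ TPC t₂ ++ [⇑,↓] ++ ⋯ ++ [⇑,↓] ++ TPC tₖ ++ [⇑]`
for children subtrees `t₁, …, tₖ`, `k ≥ 2`. -/
def TPC : PTree → List PCSym
  | node [] => []
  | node [t] => TPC t ++ [.up]
  | node (t₁ :: t₂ :: ts) => TPC t₁ ++ [.up, .down] ++ TPCRest (t₂ :: ts)
/-- TPC contribution of the second-onwards children subtrees. -/
def TPCRest : List PTree → List PCSym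
  | [] => []
  | [t] => TPC t ++ [.upSeen]
  | t :: ts => TPC t ++ [.upSeen, .down] ++ TPCRest ts
end

/-- Binary encoding of the pit-climbing symbols: ↓ ↦ 0, ⇑ ↦ 00, ↑ ↦ 1. -/
def pcBits : PCSym → List Bool
  | .down => [false]
  | .upSeen => [false, false]
  | .up => [true]

/-- Binary pit-climbing code PC. -/
def PC (T : PTree) : List Bool := (TPC T).flatMap pcBits

lemma numNodesList_append (a b : List PTree) :
    numNodesList (a ++ b) = numNodesList a + numNodesList b := by
  induction a with
  | nil => simp [numNodesList]
  | cons t ts ih => simp [numNodesList, ih]; ring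

lemma numNodesList_children_flatten (l : List PTree) :
    numNodesList ((l.map children).flatten) + l.length = numNodesList l := by
  induction l with
  | nil => simp [numNodesList]
  | cons t ts ih =>
      cases t with
      | node cs =>
        simp only [List.map_cons, List.flatten_cons, numNodesList_append,
          List.length_cons, numNodesList, children, numNodes]
        omega

/-- Breadth-first list of the sibling groups of a tree, starting from the list
`gs` of sibling groups at the current level: the groups of the current level
followed by the groups of children on the levels below, level by level and
left to right within each level. -/
def bfsGroups (gs : List (List PTree)) : List (List PTree) :=
  if h : gs.flatten.isEmpty then []
  else gs ++ bfsGroups (gs.flatten.map children)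
termination_by numNodesList gs.flatten
decreasing_by
  have h1 := numNodesList_children_flatten gs.flatten
  have h2 : gs.flatten.length ≠ 0 := by
    intro hh
    rw [List.length_eq_zero_iff] at hh
    exact h (List.isEmpty_iff.mpr hh)
  omega

/-- Symbols of the ternary tunnel-digging code: ←, →, ⇒. -/
inductive TDSym : Type
  | leaf   -- ← : a leaf node
  | inner  -- → : a node with at least one child
  | tunnel -- ⇒ : transition between consecutive non-sibling nodes
deriving DecidableEq

/-- The symbols written for one sibling group: ← for each leaf, → for each
node with at least one child. -/
def groupSyms (g : List PTree) : List TDSym :=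
  g.map (fun t => if t.children.isEmpty then .leaf else .inner)

/-- Ternary tunnel-digging code TTD: the non-root nodes in breadth-first order
(by increasing depth, left to right within each depth), ← for each leaf and →
for each internal node, with ⇒ inserted between every two consecutive
non-sibling nodes. -/
def TTD (T : PTree) : List TDSym :=
  List.intercalate [TDSym.tunnel]
    (((bfsGroups [T.children]).filter (fun g => ¬ g.isEmpty)).map groupSyms)

/-- Binary encoding of the tunnel-digging symbols: ⇒ ↦ 0, → ↦ 00, ← ↦ 1. -/
def tdBits : TDSym → List Bool
  | .tunnel => [false]
  | .inner => [false, false]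
  | .leaf => [true]

/-- Binary tunnel-digging code TD. -/
def TD (T : PTree) : List Bool := (TTD T).flatMap tdBits

/-- TreeExplorer code TE: `0·PC(T)` if `l(T) < n(T)/2`, and `1·TD(T)` otherwise. -/
def TE (T : PTree) : List Bool :=
  if 2 * numLeaves T < numNodes T then false :: PC T else true :: TD T

end PTree

namespace PTree

/-! ### Auxiliary lemmas -/

lemma numNodes_pos (t : PTree) : 1 ≤ numNodes t := by
  cases t with | node ts => simp [numNodes]

lemma numLeavesList_append (a b : List PTree) :
    numLeavesList (a ++ b) = numLeavesList a + numLeavesList b := by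
  induction a with
  | nil => simp [numLeavesList]
  | cons t ts ih => simp [numLeavesList, ih]; ring

/-- count of internal (non-leaf) trees in a list -/
def intCount (l : List PTree) : ℕ := (l.filter (fun t => !t.children.isEmpty)).length

/-- count of leaf trees in a list -/
def leafCount (l : List PTree) : ℕ := (l.filter (fun t => t.children.isEmpty)).length

lemma intCount_add_leafCount (l : List PTree) : intCount l + leafCount l = l.length := by
  induction l with
  | nil => simp [intCount, leafCount]
  | cons t ts ih =>
      simp only [intCount, leafCount, List.filter_cons] at *
      by_cases h : t.children.isEmpty = true <;> simp [h] at * <;> omega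

lemma numLeaves_eq (t : PTree) :
    numLeaves t = numLeavesList t.children + (if t.children.isEmpty then 1 else 0) := by
  cases t with
  | node ts =>
    cases ts with
    | nil => simp [numLeaves, numLeavesList, children]
    | cons a as => simp [numLeaves, numLeavesList, children]

lemma numLeavesList_children_flatten (l : List PTree) :
    numLeavesList ((l.map children).flatten) + leafCount l = numLeavesList l := by
  induction l with
  | nil => simp [numLeavesList, leafCount]
  | cons t ts ih =>
      have ht := numLeaves_eq t
      simp only [List.map_cons, List.flatten_cons, numLeavesList_append, leafCount,
        List.filter_cons, numLeavesList] at *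
      by_cases h : t.children.isEmpty = true <;> simp [h] at ht ⊢ <;> omega

/-- length of the bit encoding of the symbols of one group -/
def gbits (g : List PTree) : ℕ := ((groupSyms g).flatMap tdBits).length

lemma gbits_nil : gbits [] = 0 := rfl

lemma gbits_eq (g : List PTree) : gbits g = g.length + intCount g := by
  induction g with
  | nil => simp [gbits_nil, intCount]
  | cons t ts ih =>
      simp only [gbits, groupSyms, intCount, List.map_cons, List.flatMap_cons,
        List.length_append, List.filter_cons] at *
      by_cases h : t.children.isEmpty = true <;>
        simp [h, tdBits] at * <;> omega

lemma gbits_append (a b : List PTree) : gbits (a ++ b) = gbits a + gbits b := by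
  simp [gbits_eq, intCount, List.filter_append]; omega

lemma sum_gbits (gs : List (List PTree)) : (gs.map gbits).sum = gbits gs.flatten := by
  induction gs with
  | nil => simp [gbits_nil]
  | cons g gsx ih => simp [gbits_append, ih]

/-- number of nonempty groups -/
def NEcount (gs : List (List PTree)) : ℕ := (gs.filter (fun g => !g.isEmpty)).length

lemma NEcount_append (a b : List (List PTree)) :
    NEcount (a ++ b) = NEcount a + NEcount b := by
  simp [NEcount, List.filter_append]

lemma NEcount_children (l : List PTree) : NEcount (l.map children) = intCount l := by
  induction l with
  | nil => simp [NEcount, intCount]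
  | cons t ts ih =>
      simp only [NEcount, intCount, List.map_cons, List.filter_cons] at *
      by_cases h : t.children.isEmpty = true <;> simp [h] <;> omega

lemma NEcount_eq_zero (gs : List (List PTree)) (h : gs.flatten = []) : NEcount gs = 0 := by
  rw [List.flatten_eq_nil_iff] at h
  simp only [NEcount, List.length_eq_zero_iff, List.filter_eq_nil_iff]
  intro g hg
  simp [List.isEmpty_iff, h g hg]

lemma sum_gbits_bfs (gs : List (List PTree)) :
    ((bfsGroups gs).map gbits).sum + numLeavesList gs.flatten
      = 2 * numNodesList gs.flatten := by
  by_cases h : gs.flatten.isEmpty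
  · rw [bfsGroups, dif_pos h]
    rw [List.isEmpty_iff] at h
    simp [h, numLeavesList, numNodesList]
  · rw [bfsGroups, dif_neg h]
    have ih := sum_gbits_bfs (gs.flatten.map children)
    have h1 := numNodesList_children_flatten gs.flatten
    have h2 := numLeavesList_children_flatten gs.flatten
    have h3 := intCount_add_leafCount gs.flatten
    have h4 : (gs.map gbits).sum = gs.flatten.length + intCount gs.flatten := by
      rw [sum_gbits, gbits_eq]
    rw [List.map_append, List.sum_append]
    omega
termination_by numNodesList gs.flatten
decreasing_by
  have h1 := numNodesList_children_flatten gs.flatten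
  have h2 : gs.flatten.length ≠ 0 := by
    intro hh
    rw [List.length_eq_zero_iff] at hh
    exact h (List.isEmpty_iff.mpr hh)
  omega

lemma NEcount_bfs (gs : List (List PTree)) :
    NEcount (bfsGroups gs) + numLeavesList gs.flatten
      = NEcount gs + numNodesList gs.flatten := by
  by_cases h : gs.flatten.isEmpty
  · rw [bfsGroups, dif_pos h]
    rw [List.isEmpty_iff] at h
    rw [NEcount_eq_zero gs h]
    simp [h, numLeavesList, numNodesList, NEcount]
  · rw [bfsGroups, dif_neg h]
    have ih := NEcount_bfs (gs.flatten.map children)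
    have h1 := numNodesList_children_flatten gs.flatten
    have h2 := numLeavesList_children_flatten gs.flatten
    have h3 := intCount_add_leafCount gs.flatten
    have h4 := NEcount_children gs.flatten
    rw [NEcount_append]
    omega
termination_by numNodesList gs.flatten
decreasing_by
  have h1 := numNodesList_children_flatten gs.flatten
  have h2 : gs.flatten.length ≠ 0 := by
    intro hh
    rw [List.length_eq_zero_iff] at hh
    exact h (List.isEmpty_iff.mpr hh)
  omega

lemma tlen_eq (X : List (List TDSym)) (h : X ≠ []) :
    ((List.intercalate [TDSym.tunnel] X).flatMap tdBits).length + 1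
      = (X.map (fun s => (s.flatMap tdBits).length)).sum + X.length := by
  induction X with
  | nil => exact absurd rfl h
  | cons s rest ih =>
      cases rest with
      | nil => simp [List.intercalate, List.intersperse]
      | cons s2 r2 =>
          have h2 : List.intercalate [TDSym.tunnel] (s :: s2 :: r2)
              = s ++ [TDSym.tunnel] ++ List.intercalate [TDSym.tunnel] (s2 :: r2) := by
            simp [List.intercalate, List.intersperse]
          rw [h2]
          have := ih (by simp)
          simp only [List.flatMap_append, List.length_append, List.map_cons,
            List.sum_cons, List.length_cons] at *
          simp [tdBits] at *
          omega

lemma sum_filtered (gs : List (List PTree)) :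
    (((gs.filter (fun g => !g.isEmpty)).map groupSyms).map
        (fun s => (s.flatMap tdBits).length)).sum = (gs.map gbits).sum := by
  induction gs with
  | nil => simp
  | cons g rest ih =>
      simp only [List.filter_cons]
      by_cases h : g.isEmpty = true
      · have hg : g = [] := List.isEmpty_iff.mp h
        rw [h, if_neg (by simp)]
        simp only [List.map_cons, List.sum_cons]
        rw [ih, hg]
        simp [gbits_nil]
      · rw [Bool.not_eq_true] at h
        rw [h, if_pos (by simp)]
        simp only [List.map_cons, List.sum_cons]
        rw [ih]
        rfl

lemma TD_length (T : PTree) (hn : 2 ≤ numNodes T) :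
    (TD T).length + 2 * numLeaves T + 3 = 3 * numNodes T := by
  obtain ⟨ts⟩ := T
  have hts : ts ≠ [] := by
    intro h; subst h; simp [numNodes, numNodesList] at hn
  have hpred : (fun (g : List PTree) => decide ¬ g.isEmpty) = (fun g => !g.isEmpty) := by
    funext g; cases g <;> simp
  have hch : children (node ts) = ts := rfl
  have hflat : ([ts] : List (List PTree)).flatten = ts := by simp
  have hne : ¬ (bfsGroups [ts]).filter (fun g => !g.isEmpty) = [] := by
    rw [bfsGroups]
    rw [dif_neg (by simp [hflat, List.isEmpty_iff, hts])]
    simp only [List.filter_append, List.filter_cons, List.filter_nil]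
    simp [List.isEmpty_iff, hts]
  have hmapne : ((bfsGroups [ts]).filter (fun g => !g.isEmpty)).map groupSyms ≠ [] := by
    simp [hne]
  have h1 := tlen_eq _ hmapne
  have h2 := sum_filtered (bfsGroups [ts])
  have h3 := sum_gbits_bfs [ts]
  have h4 := NEcount_bfs [ts]
  have h5 : NEcount [ts] = 1 := by
    simp [NEcount, List.filter_cons, List.isEmpty_iff, hts]
  have h6 : ((bfsGroups [ts]).filter (fun g => !g.isEmpty)).length
      = NEcount (bfsGroups [ts]) := rfl
  have h7 : numLeaves (node ts) = numLeavesList ts := by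
    obtain - | ⟨a, as⟩ := ts
    · exact absurd rfl hts
    · simp [numLeaves, numLeavesList]
  have h8 : numNodes (node ts) = 1 + numNodesList ts := rfl
  have hTD : (TD (node ts)).length
      = ((List.intercalate [TDSym.tunnel]
          (((bfsGroups [ts]).filter (fun g => !g.isEmpty)).map groupSyms)).flatMap tdBits).length := by
    simp only [TD, TTD, hch, hpred]
  rw [hTD, h7, h8]
  rw [hflat] at h3 h4
  rw [List.length_map] at h1
  omega

mutual

lemma PC_length (t : PTree) :
    ((TPC t).flatMap pcBits).length + 3 = numNodes t + 2 * numLeaves t := by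
  match t with
  | node [] => simp [TPC, numNodes, numNodesList, numLeaves]
  | node [t1] =>
      have := PC_length t1
      simp only [TPC, numNodes, numNodesList, numLeaves, List.flatMap_append,
        List.length_append] at *
      simp [pcBits, numNodesList, numLeavesList] at *
      omega
  | node (t1 :: t2 :: rest) =>
      have h1 := PC_length t1
      have h2 := PCRest_length (t2 :: rest) (by simp)
      simp only [TPC, numNodes, numNodesList, numLeaves, List.flatMap_append,
        List.length_append] at *
      simp only [numLeavesList] at *
      simp [pcBits, numNodesList, numLeavesList] at *
      omega
termination_by (numNodes t, 0)
decreasing_by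
  all_goals simp_wf
  all_goals rw [Prod.lex_iff]
  all_goals simp only [numNodes, numNodesList]
  all_goals (try have := numNodes_pos t1)
  all_goals (try have := numNodes_pos t2)
  all_goals omega

lemma PCRest_length (ts : List PTree) (h : ts ≠ []) :
    ((TPCRest ts).flatMap pcBits).length + 1 = numNodesList ts + 2 * numLeavesList ts := by
  match ts with
  | [] => exact absurd rfl h
  | [t1] =>
      have := PC_length t1
      simp only [TPCRest, numNodesList, numLeavesList, List.flatMap_append,
        List.length_append] at *
      simp [pcBits, numNodesList, numLeavesList] at *
      omega
  | t1 :: t2 :: rest =>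
      have h1 := PC_length t1
      have h2 := PCRest_length (t2 :: rest) (by simp)
      simp only [TPCRest, numNodesList, numLeavesList, List.flatMap_append,
        List.length_append] at *
      simp [pcBits, numNodesList, numLeavesList] at *
      omega
termination_by (numNodesList ts, 1)
decreasing_by
  all_goals simp_wf
  all_goals rw [Prod.lex_iff]
  all_goals simp only [numNodes, numNodesList]
  all_goals (try have := numNodes_pos t1)
  all_goals (try have := numNodes_pos t2)
  all_goals omega

end

end PTree

open PTree in
/-- **Crossover criterion.** For every rooted plane tree `T` with `n ≥ 2`
nodes and `l` leaves, `TD(T)` is strictly shorter than `PC(T)` iff `2l > n`,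
and the two codes have equal length iff `2l = n`. -/
theorem crossover_criterion (T : PTree) (hn : 2 ≤ numNodes T) :
    ((TD T).length < (PC T).length ↔ numNodes T < 2 * numLeaves T) ∧
    ((TD T).length = (PC T).length ↔ 2 * numLeaves T = numNodes T) := by
  have h1 := TD_length T hn
  have h2 := PC_length T
  have h3 : (PC T).length = ((TPC T).flatMap pcBits).length := by simp [PC]
  constructor <;> constructor <;> intro h <;> omega
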